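/- For any word x of length n over {0,…,q−1}, any deletion set D ⊆ {1,…,n} with |D| = c, the index I(x^{(D)}) = M(x) − M(x^{(D)}) is nonnegative, and if c ≤ d then I(x^{(D)}) ≤ p·(w_{n−c+1} + w_{n−c+2} + ⋯ + w_n) < w_{n+1}. -/

import Mathlib

/-- Weight sequence: `W p d i` = w_i(q,d) where p = q-1; w_i = 0 for i ≤ 0 (encoded by
ℕ truncated subtraction together with `W p d 0 = 0`), and w_i = 1 + p·∑_{j=1}^d w_{i-j}
for i ≥ 1. -/
def W (p d : ℕ) : ℕ → ℕ
  | 0 => 0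
  | (i+1) => 1 + p * ∑ j ∈ Finset.range d, W p d (i - j)
decreasing_by exact Nat.lt_succ_of_le (Nat.sub_le i j)

/-- Moment of a word (1-indexed): M(x) = ∑_{i=1}^{n} w_i x_i. -/
def moment (w : ℕ → ℕ) (x : List ℕ) : ℕ :=
  ∑ i ∈ Finset.range x.length, w (i + 1) * x.getD i 0

/-- Deleted word x^{(D)}: delete the symbols at the (1-indexed) positions in D,
keeping the remaining symbols in order. -/
def deleteD (x : List ℕ) (D : Finset ℕ) : List ℕ :=
  ((List.range x.length).filter (fun i => (i + 1) ∉ D)).map (fun i => x.getD i 0)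

/-! ### Auxiliary lemmas -/

lemma W_succ' (p d i : ℕ) : W p d (i+1) = 1 + p * ∑ j ∈ Finset.range d, W p d (i - j) := by
  rw [W]

lemma W_zero' (p d : ℕ) : W p d 0 = 0 := by rw [W]

lemma W_le_succ (p d : ℕ) : ∀ i, W p d i ≤ W p d (i+1) := by
  intro i
  induction i using Nat.strong_induction_on with
  | _ i ih =>
    match i with
    | 0 => rw [W_zero']; exact Nat.zero_le _
    | (i+1) =>
      rw [W_succ', W_succ']
      refine Nat.add_le_add_left (Nat.mul_le_mul_left _ (Finset.sum_le_sum fun j _ => ?_)) _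
      rcases le_or_gt j i with h | h
      · have : i + 1 - j = (i - j) + 1 := by omega
        rw [this]
        exact ih (i - j) (by omega)
      · have : i - j = 0 := by omega
        rw [this, W_zero']
        exact Nat.zero_le _

lemma W_mono (p d : ℕ) : Monotone (W p d) := monotone_nat_of_le_succ (W_le_succ p d)

/-- 0-indexed moment with a general weight sequence. -/
def momentV (v : ℕ → ℕ) (x : List ℕ) : ℕ :=
  ∑ i ∈ Finset.range x.length, v i * x.getD i 0

lemma momentV_cons (v : ℕ → ℕ) (a : ℕ) (x : List ℕ) :
    momentV v (a :: x) = v 0 * a + momentV (fun i => v (i+1)) x := by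
  unfold momentV
  rw [List.length_cons, Finset.sum_range_succ']
  simp [add_comm]

lemma momentV_shift (p : ℕ) (v u : ℕ → ℕ) (y : List ℕ) (hvu : ∀ i, v i ≤ u i)
    (hy : ∀ a ∈ y, a ≤ p) :
    momentV u y + p * ∑ i ∈ Finset.range y.length, v i ≤
      momentV v y + p * ∑ i ∈ Finset.range y.length, u i := by
  unfold momentV
  rw [Finset.mul_sum, Finset.mul_sum, ← Finset.sum_add_distrib, ← Finset.sum_add_distrib]
  refine Finset.sum_le_sum fun i hi => ?_
  have hyi : y.getD i 0 ≤ p := by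
    rw [Finset.mem_range] at hi
    rw [List.getD_eq_getElem y 0 hi]
    exact hy _ (y.getElem_mem hi)
  obtain ⟨t, ht⟩ := Nat.exists_eq_add_of_le (hvu i)
  rw [ht]
  nlinarith [Nat.mul_le_mul_left t hyi]

lemma momentV_le (v u : ℕ → ℕ) (y : List ℕ) (hvu : ∀ i, v i ≤ u i) :
    momentV v y ≤ momentV u y :=
  Finset.sum_le_sum fun i _ => Nat.mul_le_mul_right _ (hvu i)

/-- Key induction: moment comparison along a sublist. -/
lemma sublist_moment (p : ℕ) {y x : List ℕ} (h : List.Sublist y x) :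
    ∀ v : ℕ → ℕ, Monotone v → (∀ a ∈ x, a ≤ p) →
    momentV v y ≤ momentV v x ∧
    momentV v x + p * ∑ i ∈ Finset.range y.length, v i ≤
      momentV v y + p * ∑ i ∈ Finset.range x.length, v i := by
  induction h with
  | slnil => intro v _ _; exact ⟨le_refl _, le_refl _⟩
  | @cons y x a h ih =>
    intro v hv hx
    have hx' : ∀ b ∈ x, b ≤ p := fun b hb => hx b (List.mem_cons_of_mem a hb)
    have ha : a ≤ p := hx a List.mem_cons_self
    have hv' : Monotone (fun i => v (i+1)) := fun i j hij => hv (by omega)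
    have hvv' : ∀ i, v i ≤ v (i+1) := fun i => hv (Nat.le_succ i)
    obtain ⟨ih1, ih2⟩ := ih (fun i => v (i+1)) hv' hx'
    have hy' : ∀ b ∈ y, b ≤ p := fun b hb => hx' b (h.subset hb)
    have hsh := momentV_shift p v (fun i => v (i+1)) y hvv' hy'
    have hmle := momentV_le v (fun i => v (i+1)) y hvv'
    constructor
    · rw [momentV_cons]
      calc momentV v y ≤ momentV (fun i => v (i+1)) y := hmle
        _ ≤ momentV (fun i => v (i+1)) x := ih1
        _ ≤ _ := Nat.le_add_left _ _
    · rw [momentV_cons, List.length_cons, Finset.sum_range_succ']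
      have hav : v 0 * a ≤ p * v 0 := by
        calc v 0 * a ≤ v 0 * p := Nat.mul_le_mul_left _ ha
          _ = p * v 0 := Nat.mul_comm _ _
      have expand : p * (∑ i ∈ Finset.range x.length, v (i+1) + v 0)
          = p * ∑ i ∈ Finset.range x.length, v (i+1) + p * v 0 := by ring
      rw [expand]
      linarith [ih2, hsh, hav]
  | @cons_cons y x a h ih =>
    intro v hv hx
    have hx' : ∀ b ∈ x, b ≤ p := fun b hb => hx b (List.mem_cons_of_mem a hb)
    have hv' : Monotone (fun i => v (i+1)) := fun i j hij => hv (by omega)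
    obtain ⟨ih1, ih2⟩ := ih (fun i => v (i+1)) hv' hx'
    constructor
    · rw [momentV_cons, momentV_cons]
      exact Nat.add_le_add_left ih1 _
    · rw [momentV_cons, momentV_cons, List.length_cons, List.length_cons,
        Finset.sum_range_succ', Finset.sum_range_succ']
      have e1 : p * (∑ i ∈ Finset.range x.length, v (i+1) + v 0)
          = p * ∑ i ∈ Finset.range x.length, v (i+1) + p * v 0 := by ring
      have e2 : p * (∑ i ∈ Finset.range y.length, v (i+1) + v 0)
          = p * ∑ i ∈ Finset.range y.length, v (i+1) + p * v 0 := by ring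
      rw [e1, e2]
      linarith [ih2]

lemma deleteD_sublist (x : List ℕ) (D : Finset ℕ) : List.Sublist (deleteD x D) x := by
  have hx : (List.range x.length).map (fun i => x.getD i 0) = x := by
    apply List.ext_getElem
    · simp
    · intro i h1 h2
      simp [List.getD_eq_getElem?_getD, List.getElem?_eq_getElem h2]
  conv_rhs => rw [← hx]
  exact List.Sublist.map _ List.filter_sublist

lemma length_deleteD (x : List ℕ) (D : Finset ℕ) (hD : D ⊆ Finset.Icc 1 x.length) :
    (deleteD x D).length = x.length - D.card := by
  set n := x.length
  have h1 : (deleteD x D).length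
      = ((Finset.range n).filter (fun i => (i+1) ∉ D)).card := by
    rw [deleteD, List.length_map]
    rfl
  have h2 : ((Finset.range n).filter (fun i => (i+1) ∈ D)).card = D.card := by
    refine Finset.card_bij' (fun i _ => i + 1) (fun m _ => m - 1) ?_ ?_ ?_ ?_
    · intro i hi
      exact (Finset.mem_filter.mp hi).2
    · intro m hm
      have := Finset.mem_Icc.mp (hD hm)
      rw [Finset.mem_filter, Finset.mem_range]
      constructor
      · omega
      · have h : m - 1 + 1 = m := by omega
        rw [h]; exact hm
    · intro i hi; omega
    · intro m hm
      have := Finset.mem_Icc.mp (hD hm)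
      omega
  have h3 := Finset.card_filter_add_card_filter_not
    (s := Finset.range n) (p := fun i => (i+1) ∈ D)
  rw [Finset.card_range] at h3
  rw [h1, ← h2]
  have h4 : (Finset.filter (fun i => ¬ (i+1) ∈ D) (Finset.range n)) =
      (Finset.filter (fun i => (i+1) ∉ D) (Finset.range n)) := rfl
  rw [h4] at h3
  omega

lemma sum_range_succ_eq_Ioc (w : ℕ → ℕ) (m : ℕ) :
    ∑ i ∈ Finset.range m, w (i+1) = ∑ i ∈ Finset.Ioc 0 m, w i := by
  refine Finset.sum_nbij' (fun i => i + 1) (fun j => j - 1) ?_ ?_ ?_ ?_ ?_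
  · intro a ha; rw [Finset.mem_range] at ha; rw [Finset.mem_Ioc]; omega
  · intro a ha; rw [Finset.mem_Ioc] at ha; rw [Finset.mem_range]; omega
  · intro a _; omega
  · intro a ha; rw [Finset.mem_Ioc] at ha; omega
  · intro a _; rfl

lemma sum_Ioc_eq_range_sub (w : ℕ → ℕ) (n c : ℕ) (hcn : c ≤ n) :
    ∑ i ∈ Finset.Ioc (n - c) n, w i = ∑ j ∈ Finset.range c, w (n - j) := by
  refine Finset.sum_nbij' (fun i => n - i) (fun j => n - j) ?_ ?_ ?_ ?_ ?_
  · intro a ha; rw [Finset.mem_Ioc] at ha; rw [Finset.mem_range]; omega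
  · intro a ha; rw [Finset.mem_range] at ha; rw [Finset.mem_Ioc]; omega
  · intro a ha; rw [Finset.mem_Ioc] at ha; omega
  · intro a ha; rw [Finset.mem_range] at ha; omega
  · intro a ha; rw [Finset.mem_Ioc] at ha; congr 1; omega

theorem index_bounds (q d n c : ℕ) (hq : 2 ≤ q) (hd : 1 ≤ d)
    (x : List ℕ) (hlen : x.length = n) (hx : ∀ a ∈ x, a < q)
    (D : Finset ℕ) (hD : D ⊆ Finset.Icc 1 n) (hcard : D.card = c) :
    0 ≤ (moment (W (q - 1) d) x : ℤ) - (moment (W (q - 1) d) (deleteD x D) : ℤ) ∧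
    (c ≤ d →
      (moment (W (q - 1) d) x : ℤ) - (moment (W (q - 1) d) (deleteD x D) : ℤ) ≤
        (q - 1 : ℕ) * ∑ i ∈ Finset.Icc (n - c + 1) n, (W (q - 1) d i : ℤ) ∧
      ((q - 1 : ℕ) * ∑ i ∈ Finset.Icc (n - c + 1) n, (W (q - 1) d i : ℤ)) <
        (W (q - 1) d (n + 1) : ℤ)) := by
  set p := q - 1 with hp
  set w := W p d with hw
  set v : ℕ → ℕ := fun i => w (i + 1) with hv
  set y := deleteD x D with hy
  have hsub : List.Sublist y x := deleteD_sublist x D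
  have hvmono : Monotone v := fun i j hij => W_mono p d (by omega)
  have hxp : ∀ a ∈ x, a ≤ p := fun a ha => by have := hx a ha; omega
  obtain ⟨h1, h2⟩ := sublist_moment p hsub v hvmono hxp
  have hmx : moment w x = momentV v x := rfl
  have hmy : moment w y = momentV v y := rfl
  have hcn : c ≤ n := by
    rw [← hcard]
    calc D.card ≤ (Finset.Icc 1 n).card := Finset.card_le_card hD
      _ = n := by rw [Nat.card_Icc]; omega
  have hylen : y.length = n - c := by
    rw [hy, length_deleteD x D (by rwa [hlen]), hlen, hcard]
  constructor
  · have : moment w y ≤ moment w x := by rw [hmx, hmy]; exact h1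
    have := Int.ofNat_le.mpr this
    omega
  · intro hcd
    -- the key Icc sum
    have hIcc : Finset.Icc (n - c + 1) n = Finset.Ioc (n - c) n := Finset.Icc_add_one_left_eq_Ioc _ _
    -- ℕ upper bound
    have hsplit : ∑ i ∈ Finset.Ioc 0 (n - c), w i + ∑ i ∈ Finset.Ioc (n - c) n, w i
        = ∑ i ∈ Finset.Ioc 0 n, w i :=
      Finset.sum_Ioc_consecutive w (Nat.zero_le _) (Nat.sub_le n c)
    have hB : ∑ i ∈ Finset.range x.length, v i = ∑ i ∈ Finset.Ioc 0 n, w i := by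
      rw [hlen]; exact sum_range_succ_eq_Ioc w n
    have hA : ∑ i ∈ Finset.range y.length, v i = ∑ i ∈ Finset.Ioc 0 (n - c), w i := by
      rw [hylen]; exact sum_range_succ_eq_Ioc w (n - c)
    set S : ℕ := ∑ i ∈ Finset.Ioc (n - c) n, w i with hS
    have hup : moment w x + p * ∑ i ∈ Finset.Ioc 0 (n - c), w i
        ≤ moment w y + p * (∑ i ∈ Finset.Ioc 0 (n - c), w i + S) := by
      rw [hmx, hmy]
      calc momentV v x + p * ∑ i ∈ Finset.Ioc 0 (n - c), w i
          = momentV v x + p * ∑ i ∈ Finset.range y.length, v i := by rw [hA]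
        _ ≤ momentV v y + p * ∑ i ∈ Finset.range x.length, v i := h2
        _ = momentV v y + p * (∑ i ∈ Finset.Ioc 0 (n - c), w i + S) := by
            rw [hB, hsplit]
    have hupper : moment w x ≤ moment w y + p * S := by
      have := hup
      rw [Nat.mul_add] at this
      omega
    -- strict bound: p * S < w (n+1)
    have hSle : S ≤ ∑ j ∈ Finset.range d, w (n - j) := by
      rw [hS, sum_Ioc_eq_range_sub w n c hcn]
      exact Finset.sum_le_sum_of_subset (Finset.range_subset_range.mpr hcd)
    have hstrict : p * S < w (n + 1) := by
      rw [hw, W_succ']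
      have : p * S ≤ p * ∑ j ∈ Finset.range d, W p d (n - j) :=
        Nat.mul_le_mul_left p hSle
      omega
    -- cast to ℤ
    have hcast : (∑ i ∈ Finset.Icc (n - c + 1) n, (w i : ℤ)) = (S : ℤ) := by
      rw [hIcc, hS]
      push_cast
      rfl
    constructor
    · rw [hcast]
      have h' : (moment w x : ℤ) ≤ (moment w y : ℤ) + (p : ℤ) * (S : ℤ) := by
        exact_mod_cast hupper
      push_cast at h' ⊢
      linarith
    · rw [hcast]
      exact_mod_cast hstrict
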